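/- Let X and Y be real normed spaces, let G be a set-valued map from X to Y with nonempty convex values which is Lipschitz around a point x, and let y ∈ G(x). Then for every v ∈ X, D♭G(x,y)(v) + D♭G(x,y)(0) = D♭G(x,y)(v); in particular, if w ∈ D♭G(x,y)(v) and w₀ ∈ D♭G(x,y)(0), then w + w₀ ∈ D♭G(x,y)(v). -/

import Mathlib

open Filter Topology Metric Pointwise

/-- The adjacent (intermediate) tangent cone to `K` at `x`. -/
def adjacentCone {X : Type*} [NormedAddCommGroup X] [NormedSpace ℝ X]
    (K : Set X) (x : X) : Set X :=
  {v | Tendsto (fun ε : ℝ => infDist (x + ε • v) K / ε) (𝓝[>] (0 : ℝ)) (𝓝 0)}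

/-- A set-valued map `G` is Lipschitz around `x`. -/
def LipschitzAround {X Y : Type*} [NormedAddCommGroup X] [NormedAddCommGroup Y]
    (G : X → Set Y) (x : X) : Prop :=
  ∃ c : ℝ, 0 ≤ c ∧ ∃ δ : ℝ, 0 < δ ∧ ∀ x₁ x₂ : X, ‖x₁ - x‖ < δ → ‖x₂ - x‖ < δ →
    G x₁ ⊆ G x₂ + {z : Y | ‖z‖ ≤ c * ‖x₁ - x₂‖}

/-- The adjacent directional derivative of a set-valued map `G` at `(x, y) ∈ graph G`. -/
def adjacentDeriv {X Y : Type*} [NormedAddCommGroup X] [NormedSpace ℝ X]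
    [NormedAddCommGroup Y] [NormedSpace ℝ Y]
    (G : X → Set Y) (x : X) (y : Y) (v : X) : Set Y :=
  {w | (v, w) ∈ adjacentCone {p : X × Y | p.2 ∈ G p.1} (x, y)}

section Aux
variable {X Y : Type*} [NormedAddCommGroup X] [NormedSpace ℝ X]
    [NormedAddCommGroup Y] [NormedSpace ℝ Y]
    {G : X → Set Y} {x : X} {y : Y}

lemma point_eq (t : ℝ) (v : X) (w : Y) :
    ((x, y) : X × Y) + t • (v, w) = (x + t • v, y + t • w) := rfl

/-- From membership in the adjacent derivative, with Lipschitzness, we can fix the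
first coordinate. -/
lemma slice_of_mem_deriv
    (hne : ∀ x' : X, (G x').Nonempty)
    {c δ : ℝ} (hc : 0 ≤ c) (hδ : 0 < δ)
    (hlip : ∀ x₁ x₂ : X, ‖x₁ - x‖ < δ → ‖x₂ - x‖ < δ →
      G x₁ ⊆ G x₂ + {z : Y | ‖z‖ ≤ c * ‖x₁ - x₂‖})
    (hy : y ∈ G x) {v : X} {w : Y}
    (hw : w ∈ adjacentDeriv G x y v) :
    Tendsto (fun t : ℝ => infDist (y + t • w) (G (x + t • v)) / t) (𝓝[>] 0) (𝓝 0) := by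
  set S : Set (X × Y) := {p : X × Y | p.2 ∈ G p.1} with hS
  have hwS : Tendsto (fun t : ℝ => infDist ((x, y) + t • (v, w)) S / t) (𝓝[>] 0) (𝓝 0) := hw
  set M : ℝ := max ‖v‖ ‖w‖ with hM
  have hM0 : 0 ≤ M := le_trans (norm_nonneg v) (le_max_left _ _)
  -- infDist to graph is at most t * M for t ≥ 0
  have hbound : ∀ t : ℝ, 0 ≤ t → infDist ((x, y) + t • (v, w)) S ≤ t * M := by
    intro t ht
    have hmem : ((x, y) : X × Y) ∈ S := hy
    calc infDist ((x, y) + t • (v, w)) S ≤ dist ((x, y) + t • (v, w)) (x, y) :=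
          infDist_le_dist_of_mem hmem
      _ = t * M := by
          rw [point_eq, Prod.dist_eq]
          simp only [dist_eq_norm, add_sub_cancel_left, norm_smul, Real.norm_eq_abs,
            abs_of_nonneg ht]
          rw [hM, mul_max_of_nonneg _ _ ht]
  -- eventual inequality
  have key : ∀ᶠ t : ℝ in 𝓝[>] 0,
      infDist (y + t • w) (G (x + t • v)) / t ≤
        (1 + c) * (infDist ((x, y) + t • (v, w)) S / t + t) := by
    have hsmall : ∀ᶠ t : ℝ in 𝓝[>] 0, t * (M + ‖v‖ + 1) < δ ∧ t < 1 := by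
      apply eventually_nhdsWithin_of_eventually_nhds
      have h1 : Tendsto (fun t : ℝ => t * (M + ‖v‖ + 1)) (𝓝 0) (𝓝 0) := by
        have := (continuous_id.mul (continuous_const (y := M + ‖v‖ + 1))).tendsto (0:ℝ)
        simpa only [Pi.mul_def, Pi.mul_apply, id_eq, zero_mul] using this
      have h2 : Tendsto (fun t : ℝ => t) (𝓝 (0:ℝ)) (𝓝 0) := tendsto_id
      exact (h1.eventually_lt_const hδ).and (h2.eventually_lt_const one_pos)
    filter_upwards [self_mem_nhdsWithin, hsmall] with t ht hts
    obtain ⟨htδ, ht1⟩ := hts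
    have ht0 : (0:ℝ) < t := ht
    -- pick a graph point within infDist + t^2
    have hSne : S.Nonempty := ⟨(x, y), hy⟩
    set d : ℝ := infDist ((x, y) + t • (v, w)) S with hd
    have hd0 : 0 ≤ d := infDist_nonneg
    have hlt : d < d + t^2 := by nlinarith
    obtain ⟨p, hpS, hpd⟩ := (infDist_lt_iff hSne).1 hlt
    obtain ⟨x₁, y₁⟩ := p
    have hy₁ : y₁ ∈ G x₁ := hpS
    rw [point_eq, Prod.dist_eq] at hpd
    have hdx : dist (x + t • v) x₁ < d + t^2 := lt_of_le_of_lt (le_max_left _ _) hpd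
    have hdy : dist (y + t • w) y₁ < d + t^2 := lt_of_le_of_lt (le_max_right _ _) hpd
    -- d ≤ t * M
    have hdM : d ≤ t * M := hbound t ht0.le
    have hx₁x : ‖x₁ - x‖ < δ := by
      have h1 : ‖x₁ - x‖ ≤ dist (x + t • v) x₁ + ‖t • v‖ := by
        have he : x₁ - x = (x₁ - (x + t • v)) + t • v := by abel
        rw [he, dist_comm, dist_eq_norm]
        exact norm_add_le _ _
      have h2 : ‖t • v‖ = t * ‖v‖ := by
        rw [norm_smul, Real.norm_eq_abs, abs_of_pos ht0]
      nlinarith [norm_nonneg v]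
    have hxtv : ‖(x + t • v) - x‖ < δ := by
      rw [add_sub_cancel_left, norm_smul, Real.norm_eq_abs, abs_of_pos ht0]
      nlinarith [hM0, le_max_left ‖v‖ ‖w‖, hd0]
    -- Lipschitz shift
    obtain ⟨p', hp', z, hz, hpz⟩ := hlip x₁ (x + t • v) hx₁x hxtv hy₁
    simp only [Set.mem_setOf_eq] at hz
    have hdist : dist (y + t • w) p' ≤ (d + t^2) + c * (d + t^2) := by
      have h1 : dist (y + t • w) p' ≤ dist (y + t • w) y₁ + dist y₁ p' := dist_triangle _ _ _
      have h2 : dist y₁ p' = ‖z‖ := by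
        rw [dist_eq_norm, ← hpz, add_sub_cancel_left]
      have h3 : ‖x₁ - (x + t • v)‖ = dist (x + t • v) x₁ := by
        rw [dist_comm, dist_eq_norm]
      have h4 : c * ‖x₁ - (x + t • v)‖ ≤ c * (d + t^2) := by
        rw [h3]; exact mul_le_mul_of_nonneg_left hdx.le hc
      linarith [hdy.le, le_trans hz h4]
    have h5 : infDist (y + t • w) (G (x + t • v)) ≤ (1 + c) * (d + t^2) := by
      calc infDist (y + t • w) (G (x + t • v)) ≤ dist (y + t • w) p' :=
            infDist_le_dist_of_mem hp'
        _ ≤ (1 + c) * (d + t^2) := by linarith [hdist]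
    rw [div_le_iff₀ ht0]
    have hdt : d / t * t = d := div_mul_cancel₀ d ht0.ne'
    have heq : (1 + c) * (d / t + t) * t = (1 + c) * (d + t^2) := by
      linear_combination (1 + c) * hdt
    rw [heq]; exact h5
  -- conclude by squeeze
  have h0 : ∀ᶠ t : ℝ in 𝓝[>] 0, 0 ≤ infDist (y + t • w) (G (x + t • v)) / t := by
    filter_upwards [self_mem_nhdsWithin] with t ht
    exact div_nonneg infDist_nonneg (le_of_lt ht)
  have hid : Tendsto (fun t : ℝ => t) (𝓝[>] (0:ℝ)) (𝓝 0) :=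
    tendsto_id.mono_left nhdsWithin_le_nhds
  have hsum : Tendsto (fun t : ℝ => infDist ((x, y) + t • (v, w)) S / t + t) (𝓝[>] 0) (𝓝 0) := by
    have := hwS.add hid
    rwa [add_zero] at this
  have hg : Tendsto (fun t : ℝ => (1 + c) * (infDist ((x, y) + t • (v, w)) S / t + t))
      (𝓝[>] 0) (𝓝 0) := by
    have := hsum.const_mul (1 + c)
    rwa [mul_zero] at this
  exact squeeze_zero' h0 key hg

lemma mem_deriv_of_slice
    (hne : ∀ x' : X, (G x').Nonempty) {v : X} {w : Y}
    (h : Tendsto (fun t : ℝ => infDist (y + t • w) (G (x + t • v)) / t) (𝓝[>] 0) (𝓝 0)) :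
    w ∈ adjacentDeriv G x y v := by
  show Tendsto (fun t : ℝ => infDist ((x, y) + t • (v, w)) {p : X × Y | p.2 ∈ G p.1} / t)
    (𝓝[>] 0) (𝓝 0)
  apply squeeze_zero' _ _ h
  · filter_upwards [self_mem_nhdsWithin] with t ht
    exact div_nonneg infDist_nonneg (le_of_lt ht)
  · filter_upwards [self_mem_nhdsWithin] with t ht
    have ht0 : (0:ℝ) < t := ht
    have hle : infDist ((x, y) + t • (v, w)) {p : X × Y | p.2 ∈ G p.1} ≤
        infDist (y + t • w) (G (x + t • v)) := by
      refine le_of_forall_pos_le_add fun η hη => ?_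
      obtain ⟨zz, hzz, hdz⟩ := (infDist_lt_iff (hne (x + t • v))).1
        (lt_add_of_pos_right (infDist (y + t • w) (G (x + t • v))) hη)
      have hmem : ((x + t • v, zz) : X × Y) ∈ {p : X × Y | p.2 ∈ G p.1} := hzz
      calc infDist ((x, y) + t • (v, w)) {p : X × Y | p.2 ∈ G p.1}
          ≤ dist ((x, y) + t • (v, w)) (x + t • v, zz) := infDist_le_dist_of_mem hmem
        _ = dist (y + t • w) zz := by
            rw [point_eq, Prod.dist_eq]
            simp only [dist_self]
            exact max_eq_right dist_nonneg
        _ ≤ infDist (y + t • w) (G (x + t • v)) + η := hdz.le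
    gcongr

lemma sqrt_tendsto' : Tendsto (fun t : ℝ => Real.sqrt t) (𝓝[>] 0) (𝓝[>] 0) := by
  apply tendsto_nhdsWithin_of_tendsto_nhds_of_eventually_within
  · simpa using (Real.continuous_sqrt.tendsto 0).mono_left nhdsWithin_le_nhds
  · filter_upwards [self_mem_nhdsWithin] with t ht
    exact Real.sqrt_pos.2 ht

lemma div_tendsto' : Tendsto (fun t : ℝ => t / (1 - Real.sqrt t)) (𝓝[>] 0) (𝓝[>] 0) := by
  apply tendsto_nhdsWithin_of_tendsto_nhds_of_eventually_within
  · have h1 : Tendsto (fun t : ℝ => 1 - Real.sqrt t) (𝓝[>] 0) (𝓝 1) := by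
      have h2 := (Real.continuous_sqrt.tendsto 0).mono_left
        (nhdsWithin_le_nhds (s := Set.Ioi (0:ℝ)))
      simpa using (tendsto_const_nhds (x := (1:ℝ)) (f := 𝓝[>] (0:ℝ))).sub h2
    have h0 : Tendsto (fun t : ℝ => t) (𝓝[>] 0) (𝓝 0) :=
      tendsto_id.mono_left nhdsWithin_le_nhds
    have := h0.div h1 one_ne_zero
    rw [div_one] at this
    exact this
  · have h4 : ∀ᶠ t : ℝ in 𝓝[>] 0, t < 1/4 := by
      apply eventually_nhdsWithin_of_eventually_nhds
      exact tendsto_id.eventually_lt_const (by norm_num)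
    filter_upwards [self_mem_nhdsWithin, h4] with t ht ht4
    have hs : Real.sqrt t < 1 := by
      rw [show (1:ℝ) = Real.sqrt 1 by simp]
      exact Real.sqrt_lt_sqrt (le_of_lt ht) (by linarith)
    exact div_pos (show (0:ℝ) < t from ht) (by linarith)

lemma sqrt_lt_half : ∀ᶠ t : ℝ in 𝓝[>] 0, Real.sqrt t < 1/2 := by
  have := sqrt_tendsto'.mono_right nhdsWithin_le_nhds
  exact this.eventually_lt_const (by norm_num)

lemma slice_add
    (hne : ∀ x' : X, (G x').Nonempty) (hconv : ∀ x' : X, Convex ℝ (G x'))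
    {c δ : ℝ} (hc : 0 ≤ c) (hδ : 0 < δ)
    (hlip : ∀ x₁ x₂ : X, ‖x₁ - x‖ < δ → ‖x₂ - x‖ < δ →
      G x₁ ⊆ G x₂ + {z : Y | ‖z‖ ≤ c * ‖x₁ - x₂‖})
    {v : X} {w w₀ : Y}
    (h1 : Tendsto (fun t : ℝ => infDist (y + t • w) (G (x + t • v)) / t) (𝓝[>] 0) (𝓝 0))
    (h2 : Tendsto (fun t : ℝ => infDist (y + t • w₀) (G x) / t) (𝓝[>] 0) (𝓝 0)) :
    Tendsto (fun t : ℝ => infDist (y + t • (w + w₀)) (G (x + t • v)) / t) (𝓝[>] 0) (𝓝 0) := by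
  set F₁ : ℝ → ℝ := fun t => infDist (y + t • w) (G (x + t • v)) / t with hF₁
  set F₂ : ℝ → ℝ := fun t => infDist (y + t • w₀) (G x) / t with hF₂
  -- majorant
  set g : ℝ → ℝ := fun t => F₁ (t / (1 - Real.sqrt t)) + F₂ (Real.sqrt t)
    + (t + 2 * c * Real.sqrt t * ‖v‖) with hg
  have hgt : Tendsto g (𝓝[>] 0) (𝓝 0) := by
    have ha := h1.comp div_tendsto'
    have hb := h2.comp sqrt_tendsto'
    have hcc : Tendsto (fun t : ℝ => t + 2 * c * Real.sqrt t * ‖v‖) (𝓝[>] 0) (𝓝 0) := by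
      have : Tendsto (fun t : ℝ => t + 2 * c * Real.sqrt t * ‖v‖) (𝓝 0) (𝓝 0) := by
        have hcont : Continuous (fun t : ℝ => t + 2 * c * Real.sqrt t * ‖v‖) := by
          continuity
        have := hcont.tendsto 0
        simpa using this
      exact this.mono_left nhdsWithin_le_nhds
    have := (ha.add hb).add hcc
    simpa using this
  apply squeeze_zero' _ _ hgt
  · filter_upwards [self_mem_nhdsWithin] with t ht
    exact div_nonneg infDist_nonneg (le_of_lt ht)
  · -- the key eventual inequality
    have hsmall : ∀ᶠ t : ℝ in 𝓝[>] 0, t * (2 * ‖v‖ + 1) < δ := by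
      apply eventually_nhdsWithin_of_eventually_nhds
      have hcont : Continuous (fun t : ℝ => t * (2 * ‖v‖ + 1)) := by continuity
      have := hcont.tendsto 0
      rw [zero_mul] at this
      exact this.eventually_lt_const hδ
    filter_upwards [self_mem_nhdsWithin, sqrt_lt_half, hsmall] with t ht hl2 htδ
    have ht0 : (0:ℝ) < t := ht
    set l : ℝ := Real.sqrt t with hldef
    have hl0 : 0 < l := Real.sqrt_pos.2 ht0
    have hll : l * l = t := Real.mul_self_sqrt ht0.le
    have hl1 : l < 1 := lt_trans hl2 (by norm_num)
    have h1l : (0:ℝ) < 1 - l := by linarith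
    set s₁ : ℝ := t / (1 - l) with hs₁def
    have hs₁0 : 0 < s₁ := div_pos ht0 h1l
    have hs₁t : s₁ ≤ 2 * t := by
      rw [div_le_iff₀ h1l]; nlinarith
    have hts₁ : t ≤ s₁ := by
      rw [le_div_iff₀ h1l]; nlinarith
    -- distances
    set d₁ : ℝ := infDist (y + s₁ • w) (G (x + s₁ • v)) with hd₁
    set d₂ : ℝ := infDist (y + l • w₀) (G x) with hd₂
    have hd₁0 : 0 ≤ d₁ := infDist_nonneg
    have hd₂0 : 0 ≤ d₂ := infDist_nonneg
    obtain ⟨p, hp, hpd⟩ := (infDist_lt_iff (hne (x + s₁ • v))).1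
      (lt_add_of_pos_right d₁ (by positivity : (0:ℝ) < t^2))
    obtain ⟨q, hq, hqd⟩ := (infDist_lt_iff (hne x)).1
      (lt_add_of_pos_right d₂ (by positivity : (0:ℝ) < t^2))
    -- Lipschitz moves
    have hδ1 : ‖(x + s₁ • v) - x‖ < δ := by
      rw [add_sub_cancel_left, norm_smul, Real.norm_eq_abs, abs_of_pos hs₁0]
      nlinarith [norm_nonneg v]
    have hδ2 : ‖(x + t • v) - x‖ < δ := by
      rw [add_sub_cancel_left, norm_smul, Real.norm_eq_abs, abs_of_pos ht0]
      nlinarith [norm_nonneg v]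
    obtain ⟨p', hp', z₁, hz₁, hpz₁⟩ := hlip (x + s₁ • v) (x + t • v) hδ1 hδ2 hp
    have hδ3 : ‖x - x‖ < δ := by simpa using hδ
    obtain ⟨q', hq', z₂, hz₂, hqz₂⟩ := hlip x (x + t • v) hδ3 hδ2 hq
    simp only [Set.mem_setOf_eq] at hz₁ hz₂
    have hz₁' : ‖z₁‖ ≤ c * ((s₁ - t) * ‖v‖) := by
      have : (x + s₁ • v) - (x + t • v) = (s₁ - t) • v := by
        rw [sub_smul]; abel
      rw [this, norm_smul, Real.norm_eq_abs, abs_of_nonneg (by linarith)] at hz₁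
      exact hz₁
    have hz₂' : ‖z₂‖ ≤ c * (t * ‖v‖) := by
      have : x - (x + t • v) = (-t) • v := by
        rw [neg_smul]; abel
      rw [this, norm_smul, Real.norm_eq_abs, abs_neg, abs_of_pos ht0] at hz₂
      exact hz₂
    -- convex combination
    set r : Y := (1 - l) • p' + l • q' with hr
    have hrG : r ∈ G (x + t • v) := hconv _ hp' hq' h1l.le hl0.le (by ring)
    -- the vector identity
    have hkey : r - (y + t • (w + w₀)) =
        (1 - l) • (p' - (y + s₁ • w)) + l • (q' - (y + l • w₀)) := by
      rw [hr]
      match_scalars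
      · ring
      · ring
      · ring
      · rw [hs₁def]
        field_simp
      · linear_combination hll
    have hnorm : dist (y + t • (w + w₀)) r ≤
        (1 - l) * ‖p' - (y + s₁ • w)‖ + l * ‖q' - (y + l • w₀)‖ := by
      rw [dist_eq_norm, norm_sub_rev, hkey]
      calc ‖(1 - l) • (p' - (y + s₁ • w)) + l • (q' - (y + l • w₀))‖
          ≤ ‖(1 - l) • (p' - (y + s₁ • w))‖ + ‖l • (q' - (y + l • w₀))‖ := norm_add_le _ _
        _ = (1 - l) * ‖p' - (y + s₁ • w)‖ + l * ‖q' - (y + l • w₀)‖ := by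
            rw [norm_smul, norm_smul, Real.norm_eq_abs, Real.norm_eq_abs,
              abs_of_pos hl0, abs_of_pos h1l]
    have hp'' : ‖p' - (y + s₁ • w)‖ ≤ (d₁ + t^2) + c * ((s₁ - t) * ‖v‖) := by
      have he : p' - (y + s₁ • w) = (p - (y + s₁ • w)) - z₁ := by
        rw [← hpz₁]; beta_reduce; abel
      rw [he]
      calc ‖(p - (y + s₁ • w)) - z₁‖ ≤ ‖p - (y + s₁ • w)‖ + ‖z₁‖ := norm_sub_le _ _
        _ ≤ (d₁ + t^2) + c * ((s₁ - t) * ‖v‖) := by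
            have : ‖p - (y + s₁ • w)‖ = dist (y + s₁ • w) p := by
              rw [dist_comm, dist_eq_norm]
            rw [this]
            exact add_le_add hpd.le hz₁'
    have hq'' : ‖q' - (y + l • w₀)‖ ≤ (d₂ + t^2) + c * (t * ‖v‖) := by
      have he : q' - (y + l • w₀) = (q - (y + l • w₀)) - z₂ := by
        rw [← hqz₂]; beta_reduce; abel
      rw [he]
      calc ‖(q - (y + l • w₀)) - z₂‖ ≤ ‖q - (y + l • w₀)‖ + ‖z₂‖ := norm_sub_le _ _
        _ ≤ (d₂ + t^2) + c * (t * ‖v‖) := by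
            have : ‖q - (y + l • w₀)‖ = dist (y + l • w₀) q := by
              rw [dist_comm, dist_eq_norm]
            rw [this]
            exact add_le_add hqd.le hz₂'
    -- put it together
    have hinf : infDist (y + t • (w + w₀)) (G (x + t • v)) ≤
        (1 - l) * ((d₁ + t^2) + c * ((s₁ - t) * ‖v‖)) + l * ((d₂ + t^2) + c * (t * ‖v‖)) := by
      calc infDist (y + t • (w + w₀)) (G (x + t • v)) ≤ dist (y + t • (w + w₀)) r :=
            infDist_le_dist_of_mem hrG
        _ ≤ (1 - l) * ‖p' - (y + s₁ • w)‖ + l * ‖q' - (y + l • w₀)‖ := hnorm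
        _ ≤ _ := by
            have := mul_le_mul_of_nonneg_left hp'' h1l.le
            have := mul_le_mul_of_nonneg_left hq'' hl0.le
            linarith
    have hFd₁ : F₁ s₁ = d₁ / s₁ := rfl
    have hFd₂ : F₂ l = d₂ / l := rfl
    have hgt' : g t = F₁ s₁ + F₂ l + (t + 2 * c * l * ‖v‖) := by
      rw [hg]
    have hts : (1 - l) * s₁ = t := by
      rw [hs₁def]; field_simp
    clear_value F₁ F₂ g l s₁ d₁ d₂
    have e1 : d₁ / s₁ * t = (1 - l) * d₁ := by
      rw [← hts]; field_simp
    have e2 : d₂ / l * t = l * d₂ := by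
      rw [← hll]; field_simp
    have e3 : (1 - l) * (s₁ - t) = l * t := by linear_combination hts
    rw [hgt', hFd₁, hFd₂, div_le_iff₀ ht0]
    have hgoal : (d₁ / s₁ + d₂ / l + (t + 2 * c * l * ‖v‖)) * t =
        (1 - l) * ((d₁ + t^2) + c * ((s₁ - t) * ‖v‖)) + l * ((d₂ + t^2) + c * (t * ‖v‖)) := by
      linear_combination e1 + e2 + c * ‖v‖ * e3 - 2 * c * ‖v‖ * hts
    rw [hgoal]
    exact hinf

end Aux

theorem adjacentDeriv_add_adjacentDeriv_zero
    {X Y : Type*} [NormedAddCommGroup X] [NormedSpace ℝ X]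
    [NormedAddCommGroup Y] [NormedSpace ℝ Y]
    (G : X → Set Y) (x : X) (y : Y)
    (hne : ∀ x' : X, (G x').Nonempty) (hconv : ∀ x' : X, Convex ℝ (G x'))
    (hlip : LipschitzAround G x) (hy : y ∈ G x) :
    ∀ v : X, adjacentDeriv G x y v + adjacentDeriv G x y 0 = adjacentDeriv G x y v ∧
      ∀ w ∈ adjacentDeriv G x y v, ∀ w₀ ∈ adjacentDeriv G x y 0,
        w + w₀ ∈ adjacentDeriv G x y v := by
  obtain ⟨c, hc, δ, hδ, H⟩ := hlip
  intro v
  have part2 : ∀ w ∈ adjacentDeriv G x y v, ∀ w₀ ∈ adjacentDeriv G x y 0,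
      w + w₀ ∈ adjacentDeriv G x y v := by
    intro w hw w₀ hw₀
    have h1 := slice_of_mem_deriv hne hc hδ H hy hw
    have h2' := slice_of_mem_deriv hne hc hδ H hy hw₀
    have h2 : Tendsto (fun t : ℝ => infDist (y + t • w₀) (G x) / t) (𝓝[>] 0) (𝓝 0) := by
      simpa using h2'
    have h3 := slice_add hne hconv hc hδ H h1 h2
    exact mem_deriv_of_slice hne h3
  refine ⟨?_, part2⟩
  ext w'
  simp only [Set.mem_add]
  constructor
  · rintro ⟨a, ha, b, hb, rfl⟩
    exact part2 a ha b hb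
  · intro hw'
    refine ⟨w', hw', 0, ?_, add_zero w'⟩
    show Tendsto (fun ε : ℝ => infDist ((x, y) + ε • ((0:X), (0:Y)))
      {p : X × Y | p.2 ∈ G p.1} / ε) (𝓝[>] 0) (𝓝 0)
    have hz : ∀ ε : ℝ, infDist ((x, y) + ε • ((0:X), (0:Y)))
        {p : X × Y | p.2 ∈ G p.1} = 0 := by
      intro ε
      have he : ((x, y) : X × Y) + ε • ((0:X), (0:Y)) = (x, y) := by simp
      rw [he]
      exact infDist_zero_of_mem hy
    simp only [hz, zero_div]
    exact tendsto_const_nhds
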